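/- arXiv:0709.0885 — 2 statements merged into one kernel-verified Lean document; each statement's English description precedes it below -/
import Mathlib

section
/- For all integers n and m with m even, 2 ≤ m ≤ n − 1, one has S_{3,0}([2^n, 2^n + 2^m)) = 3^{m/2 − 1}. -/
/-- binary digit sum -/
def sigma2 (n : ℕ) : ℕ := (Nat.digits 2 n).sum

/-- `S m l x = Σ_{0 ≤ n < x, n ≡ l (mod m)} (−1)^{σ(n)}` -/
def S (m l x : ℕ) : ℤ :=
  ∑ n ∈ (Finset.range x).filter (fun n => n % m = l), (-1 : ℤ) ^ sigma2 n

/-- `Sint m l x y = S_{m,l}([x,y)) = S_{m,l}(y) − S_{m,l}(x)` -/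
def Sint (m l x y : ℕ) : ℤ := S m l y - S m l x

lemma sigma2_zero : sigma2 0 = 0 := by simp [sigma2]

lemma sigma2_two_mul (a : ℕ) (h : 0 < a) : sigma2 (2*a) = sigma2 a := by
  unfold sigma2
  rw [Nat.digits_def' (by norm_num : (1:ℕ) < 2) (by omega)]
  simp [Nat.mul_div_cancel_left, Nat.mul_mod_right]

lemma sigma2_two_mul_add_one (a : ℕ) : sigma2 (2*a+1) = sigma2 a + 1 := by
  unfold sigma2
  rw [Nat.digits_def' (by norm_num : (1:ℕ) < 2) (by omega)]
  have h1 : (2*a+1) % 2 = 1 := by omega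
  have h2 : (2*a+1) / 2 = a := by omega
  rw [h1, h2]; simp [Nat.add_comm]

lemma S_eq (m l x : ℕ) :
    S m l x = ∑ n ∈ Finset.range x, if n % m = l then (-1:ℤ)^(sigma2 n) else 0 := by
  rw [S, Finset.sum_filter]

lemma S_succ (m l x : ℕ) :
    S m l (x+1) = S m l x + if x % m = l then (-1:ℤ)^(sigma2 x) else 0 := by
  rw [S_eq, S_eq, Finset.sum_range_succ]

lemma s4_0 (x : ℕ) : sigma2 (4*x) = sigma2 x := by
  rcases Nat.eq_zero_or_pos x with h|h
  · simp [h]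
  · rw [show 4*x = 2*(2*x) by ring, sigma2_two_mul _ (by omega), sigma2_two_mul _ h]

lemma s4_1 (x : ℕ) : sigma2 (4*x+1) = sigma2 x + 1 := by
  rcases Nat.eq_zero_or_pos x with h|h
  · subst h; rw [show 4*0+1 = 2*0+1 by ring, sigma2_two_mul_add_one]
  · rw [show 4*x+1 = 2*(2*x)+1 by ring, sigma2_two_mul_add_one, sigma2_two_mul _ h]

lemma s4_2 (x : ℕ) : sigma2 (4*x+2) = sigma2 x + 1 := by
  rw [show 4*x+2 = 2*(2*x+1) by ring, sigma2_two_mul _ (by omega), sigma2_two_mul_add_one]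

lemma s4_3 (x : ℕ) : sigma2 (4*x+3) = sigma2 x + 2 := by
  rw [show 4*x+3 = 2*(2*x+1)+1 by ring, sigma2_two_mul_add_one, sigma2_two_mul_add_one]

lemma sigma2_pow_add : ∀ n k : ℕ, k < 2^n → sigma2 (2^n + k) = 1 + sigma2 k := by
  intro n
  induction n with
  | zero =>
    intro k hk
    interval_cases k
    rw [show 2^0 + 0 = 2*0+1 by norm_num, sigma2_two_mul_add_one]; simp [sigma2_zero]
  | succ n ih =>
    intro k hk
    rcases Nat.even_or_odd k with ⟨j, hj⟩ | ⟨j, hj⟩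
    · subst hj
      rw [show 2^(n+1) + (j+j) = 2*(2^n + j) by ring, sigma2_two_mul _ (by positivity)]
      rw [ih j (by rw [pow_succ] at hk; omega)]
      rcases Nat.eq_zero_or_pos j with h|h
      · simp [h]
      · rw [show j + j = 2*j by ring, sigma2_two_mul _ h]
    · subst hj
      rw [show 2^(n+1) + (2*j+1) = 2*(2^n + j)+1 by ring, sigma2_two_mul_add_one]
      rw [ih j (by rw [pow_succ] at hk; omega), sigma2_two_mul_add_one]
      ring

lemma S_zero (m l : ℕ) : S m l 0 = 0 := by simp [S]

lemma S_quad_succ (m l x : ℕ) : S m l (4*x+4) = S m l (4*x)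
    + (if (4*x) % m = l then (-1:ℤ)^(sigma2 (4*x)) else 0)
    + (if (4*x+1) % m = l then (-1:ℤ)^(sigma2 (4*x+1)) else 0)
    + (if (4*x+2) % m = l then (-1:ℤ)^(sigma2 (4*x+2)) else 0)
    + (if (4*x+3) % m = l then (-1:ℤ)^(sigma2 (4*x+3)) else 0) := by
  have e0 := S_succ m l (4*x)
  have e1 : S m l (4*x+2) = S m l (4*x+1)
      + (if (4*x+1) % m = l then (-1:ℤ)^(sigma2 (4*x+1)) else 0) := by
    rw [show 4*x+2 = (4*x+1)+1 by ring]; exact S_succ m l (4*x+1)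
  have e2 : S m l (4*x+3) = S m l (4*x+2)
      + (if (4*x+2) % m = l then (-1:ℤ)^(sigma2 (4*x+2)) else 0) := by
    rw [show 4*x+3 = (4*x+2)+1 by ring]; exact S_succ m l (4*x+2)
  have e3 : S m l (4*x+4) = S m l (4*x+3)
      + (if (4*x+3) % m = l then (-1:ℤ)^(sigma2 (4*x+3)) else 0) := by
    rw [show 4*x+4 = (4*x+3)+1 by ring]; exact S_succ m l (4*x+3)
  linarith [e0, e1, e2, e3]

lemma quad : ∀ x : ℕ,
    S 3 0 (4*x) = 2 * S 3 0 x - S 3 1 x - S 3 2 x ∧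
    S 3 1 (4*x) = 2 * S 3 1 x - S 3 0 x - S 3 2 x ∧
    S 3 2 (4*x) = 2 * S 3 2 x - S 3 0 x - S 3 1 x := by
  intro x
  induction x with
  | zero => simp [S_zero]
  | succ x ih =>
    obtain ⟨i0, i1, i2⟩ := ih
    have q0 := S_quad_succ 3 0 x
    have q1 := S_quad_succ 3 1 x
    have q2 := S_quad_succ 3 2 x
    have r0 := S_succ 3 0 x
    have r1 := S_succ 3 1 x
    have r2 := S_succ 3 2 x
    rw [s4_0, s4_1, s4_2, s4_3] at q0 q1 q2
    rw [show 4*(x+1) = 4*x+4 by ring] at *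
    rcases (show x % 3 = 0 ∨ x % 3 = 1 ∨ x % 3 = 2 by omega) with h|h|h <;>
      [ (rw [show (4*x) % 3 = 0 by omega, show (4*x+1) % 3 = 1 by omega,
            show (4*x+2) % 3 = 2 by omega, show (4*x+3) % 3 = 0 by omega]
            at q0 q1 q2);
        (rw [show (4*x) % 3 = 1 by omega, show (4*x+1) % 3 = 2 by omega,
            show (4*x+2) % 3 = 0 by omega, show (4*x+3) % 3 = 1 by omega]
            at q0 q1 q2);
        (rw [show (4*x) % 3 = 2 by omega, show (4*x+1) % 3 = 0 by omega,
            show (4*x+2) % 3 = 1 by omega, show (4*x+3) % 3 = 2 by omega]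
            at q0 q1 q2)] <;>
    · rw [h] at r0 r1 r2
      simp only [pow_succ] at q0 q1 q2
      norm_num at q0 q1 q2 r0 r1 r2
      refine ⟨?_, ?_, ?_⟩ <;> linarith [q0, q1, q2, r0, r1, r2, i0, i1, i2]

lemma S_one : S 3 0 1 = 1 ∧ S 3 1 1 = 0 ∧ S 3 2 1 = 0 := by
  refine ⟨?_, ?_, ?_⟩ <;>
    rw [show (1:ℕ) = 0+1 by rfl, S_succ, S_zero] <;> norm_num [sigma2_zero]

lemma key : ∀ t : ℕ, S 3 0 (4^(t+1)) = 2*3^t ∧ S 3 1 (4^(t+1)) = -(3^t) ∧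
    S 3 2 (4^(t+1)) = -(3^t) := by
  intro t
  induction t with
  | zero =>
    obtain ⟨a, b, c⟩ := S_one
    obtain ⟨q0, q1, q2⟩ := quad 1
    rw [show 4*1 = 4 by rfl] at q0 q1 q2
    refine ⟨?_, ?_, ?_⟩ <;> simp [pow_one, q0, q1, q2, a, b, c]
  | succ t ih =>
    obtain ⟨i0, i1, i2⟩ := ih
    obtain ⟨q0, q1, q2⟩ := quad (4^(t+1))
    rw [show 4*4^(t+1) = 4^(t+1+1) by ring] at q0 q1 q2
    rw [q0, q1, q2, i0, i1, i2]
    refine ⟨by ring, by ring, by ring⟩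

lemma two_pow_mod_three_even {n : ℕ} (h : Even n) : 2^n % 3 = 1 := by
  obtain ⟨s, hs⟩ := h
  rw [hs, show 2^(s+s) = 4^s by rw [pow_add, ← mul_pow]; norm_num, Nat.pow_mod]
  norm_num

lemma two_pow_mod_three_odd {n : ℕ} (h : Odd n) : 2^n % 3 = 2 := by
  obtain ⟨s, hs⟩ := h
  rw [hs, pow_add, pow_one, show 2^(2*s) = 4^s by rw [pow_mul]; norm_num,
    Nat.mul_mod, Nat.pow_mod]
  norm_num

theorem stmt_1 (n m : ℕ) (hm : Even m) (h2 : 2 ≤ m) (hn : m ≤ n - 1) :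
    Sint 3 0 (2 ^ n) (2 ^ n + 2 ^ m) = 3 ^ (m / 2 - 1) := by
  have hmn : m < n := by omega
  have hpow : (2:ℕ)^m < 2^n := Nat.pow_lt_pow_right (by norm_num) hmn
  rw [Sint, S_eq, S_eq,
    ← Finset.sum_Ico_eq_sub _ (Nat.le_add_right _ _),
    Finset.sum_Ico_eq_sum_range]
  simp only [Nat.add_sub_cancel_left]
  obtain ⟨s, hs⟩ := hm
  have h2m : (2:ℕ)^m = 4^((s-1)+1) := by
    rw [show (s-1)+1 = s by omega, hs, pow_add, ← mul_pow]; norm_num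
  rcases Nat.even_or_odd n with he | ho
  · have h3 : 2^n % 3 = 1 := two_pow_mod_three_even he
    have hcg : ∀ j ∈ Finset.range (2^m),
        (if (2^n + j) % 3 = 0 then (-1:ℤ)^(sigma2 (2^n + j)) else 0)
        = -(if j % 3 = 2 then (-1:ℤ)^(sigma2 j) else 0) := by
      intro j hj
      have hjlt : j < 2^n := lt_trans (Finset.mem_range.mp hj) hpow
      rw [sigma2_pow_add n j hjlt]
      by_cases hc : j % 3 = 2
      · rw [if_pos (by omega), if_pos hc, pow_add, pow_one]; ring
      · rw [if_neg (by omega), if_neg hc]; ring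
    rw [Finset.sum_congr rfl hcg, Finset.sum_neg_distrib, ← S_eq, h2m,
      (key (s-1)).2.2, show m/2 - 1 = s - 1 by omega]
    ring
  · have h3 : 2^n % 3 = 2 := two_pow_mod_three_odd ho
    have hcg : ∀ j ∈ Finset.range (2^m),
        (if (2^n + j) % 3 = 0 then (-1:ℤ)^(sigma2 (2^n + j)) else 0)
        = -(if j % 3 = 1 then (-1:ℤ)^(sigma2 j) else 0) := by
      intro j hj
      have hjlt : j < 2^n := lt_trans (Finset.mem_range.mp hj) hpow
      rw [sigma2_pow_add n j hjlt]
      by_cases hc : j % 3 = 1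
      · rw [if_pos (by omega), if_pos hc, pow_add, pow_one]; ring
      · rw [if_neg (by omega), if_neg hc]; ring
    rw [Finset.sum_congr rfl hcg, Finset.sum_neg_distrib, ← S_eq, h2m,
      (key (s-1)).2.1, show m/2 - 1 = s - 1 by omega]
    ring
end

section
/- Let y be a positive integer and m ≥ 1 an integer with 2^m dividing y. If t(y) ≡ 0 (mod 6) then S_{3,0}([y, y + 2^m)) = S_{3,0}(2^m), and if t(y) ≡ 3 (mod 6) then S_{3,0}([y, y + 2^m)) = −S_{3,0}(2^m). -/
/-- `t y = Σ (−1)^{k}` over the exponents `k` in the binary expansion of `y` -/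
def t (y : ℕ) : ℤ := ∑ i ∈ Finset.range y, if y.testBit i then (-1 : ℤ) ^ i else 0

/-- digit-sum additivity when there are no carries -/
lemma sigma2_add_of_dvd {m y k : ℕ} (hy : y ≠ 0) (hdvd : 2 ^ m ∣ y) (hk : k < 2 ^ m) :
    sigma2 (y + k) = sigma2 y + sigma2 k := by
  obtain ⟨q, rfl⟩ := hdvd
  have hq : 0 < q := by
    rcases Nat.eq_zero_or_pos q with h | h
    · simp [h] at hy
    · exact h
  have hlen : (Nat.digits 2 k).length ≤ m := by
    rcases Nat.eq_zero_or_pos k with rfl | hk0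
    · simp
    · rw [Nat.digits_len 2 k (by norm_num) hk0.ne']
      have := Nat.log_lt_of_lt_pow hk0.ne' hk
      omega
  have key := Nat.digits_append_zeroes_append_digits
      (b := 2) (k := m - (Nat.digits 2 k).length) (m := q) (n := k) (by norm_num) hq
  rw [Nat.add_sub_cancel' hlen] at key
  have h1 : sigma2 (k + 2 ^ m * q) = sigma2 k + sigma2 q := by
    unfold sigma2
    rw [← key]
    simp [List.sum_append, List.sum_replicate]
  have h2 : sigma2 (2 ^ m * q) = sigma2 q := by
    unfold sigma2
    rw [Nat.digits_base_pow_mul (by norm_num) hq]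
    simp [List.sum_append, List.sum_replicate]
  rw [Nat.add_comm (2 ^ m * q) k, h1, h2, Nat.add_comm]

lemma t_eq_sum (y N : ℕ) (h : y ≤ N) :
    t y = ∑ i ∈ Finset.range N, if y.testBit i then (-1 : ℤ) ^ i else 0 := by
  unfold t
  apply Finset.sum_subset (Finset.range_subset_range.mpr h)
  intro i _ hi
  simp only [Finset.mem_range, not_lt] at hi
  have : y.testBit i = false :=
    Nat.testBit_eq_false_of_lt (lt_of_le_of_lt hi (Nat.lt_two_pow_self (n := i)))
  simp [this]

lemma t_rec (y : ℕ) :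
    t y = (if y % 2 = 1 then (1 : ℤ) else 0) - t (y / 2) := by
  have h1 : t y = ∑ i ∈ Finset.range (y + 1), if y.testBit i then (-1 : ℤ) ^ i else 0 :=
    t_eq_sum y (y + 1) (Nat.le_succ y)
  rw [h1, Finset.sum_range_succ']
  have h2 : ∀ i, (if y.testBit (i + 1) then (-1 : ℤ) ^ (i + 1) else 0) =
      -(if (y / 2).testBit i then (-1 : ℤ) ^ i else 0) := by
    intro i
    rw [show y.testBit (i + 1) = (y / 2).testBit i from Nat.testBit_succ y i]
    split <;> ring
  simp only [h2, Finset.sum_neg_distrib]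
  rw [← t_eq_sum (y / 2) y (Nat.div_le_self y 2)]
  rw [Nat.testBit_zero]
  by_cases hp : y % 2 = 1 <;> simp [hp] <;> ring

lemma sigma2_rec {y : ℕ} (hy : y ≠ 0) : sigma2 y = y % 2 + sigma2 (y / 2) := by
  unfold sigma2
  rw [Nat.digits_def' (by norm_num : (1:ℕ) < 2) (Nat.pos_of_ne_zero hy)]
  simp

lemma t_mod_key : ∀ y : ℕ, ((t y : ZMod 3) = (y : ZMod 3)) ∧ ((t y : ZMod 2) = (sigma2 y : ZMod 2)) := by
  intro y
  induction y using Nat.strong_induction_on with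
  | _ y ih =>
    rcases Nat.eq_zero_or_pos y with rfl | hy
    · constructor <;> simp [t, sigma2]
    · have hlt : y / 2 < y := Nat.div_lt_self hy (by norm_num)
      obtain ⟨ih3, ih2⟩ := ih (y / 2) hlt
      have hrec := t_rec y
      have hyd : y = 2 * (y / 2) + y % 2 := (Nat.div_add_mod y 2).symm ▸ by omega
      constructor
      · push_cast [hrec]
        rw [ih3]
        have : (y : ZMod 3) = 2 * ((y / 2 : ℕ) : ZMod 3) + ((y % 2 : ℕ) : ZMod 3) := by
          conv_lhs => rw [hyd]
          push_cast
          ring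
        rw [this]
        have h2 : (2 : ZMod 3) = -1 := by decide
        rcases Nat.mod_two_eq_zero_or_one y with h | h <;> simp [h, h2] <;> ring
      · push_cast [hrec]
        rw [ih2, sigma2_rec hy.ne']
        push_cast
        have hneg : ∀ x : ZMod 2, -x = x := by decide
        rcases Nat.mod_two_eq_zero_or_one y with h | h <;>
          simp [h, sub_eq_add_neg, hneg]

theorem stmt_13 (y m : ℕ) (hy : 0 < y) (hm : 1 ≤ m) (hdvd : 2 ^ m ∣ y) :
    (t y % 6 = 0 → Sint 3 0 y (y + 2 ^ m) = S 3 0 (2 ^ m)) ∧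
    (t y % 6 = 3 → Sint 3 0 y (y + 2 ^ m) = -S 3 0 (2 ^ m)) := by
  obtain ⟨h3, h2⟩ := t_mod_key y
  -- main computation, assuming 3 ∣ y
  have main : 3 ∣ y → Sint 3 0 y (y + 2 ^ m) = (-1 : ℤ) ^ sigma2 y * S 3 0 (2 ^ m) := by
    intro hy3
    obtain ⟨c, hc⟩ := hy3
    have hy3' : y % 3 = 0 := by omega
    unfold Sint S
    rw [Finset.sum_filter, Finset.sum_filter, Finset.sum_filter]
    have hsplit : ∑ n ∈ Finset.range (y + 2 ^ m), (if n % 3 = 0 then (-1 : ℤ) ^ sigma2 n else 0)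
        = (∑ n ∈ Finset.range y, (if n % 3 = 0 then (-1 : ℤ) ^ sigma2 n else 0))
          + ∑ k ∈ Finset.range (2 ^ m),
              (if (y + k) % 3 = 0 then (-1 : ℤ) ^ sigma2 (y + k) else 0) := by
      exact Finset.sum_range_add (fun n => if n % 3 = 0 then (-1 : ℤ) ^ sigma2 n else 0) y (2 ^ m)
    rw [hsplit, add_sub_cancel_left, Finset.mul_sum]
    apply Finset.sum_congr rfl
    intro k hk
    simp only [Finset.mem_range] at hk
    have hmod : (y + k) % 3 = k % 3 := by omega
    have hsig : sigma2 (y + k) = sigma2 y + sigma2 k := sigma2_add_of_dvd hy.ne' hdvd hk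
    rw [hmod, hsig, pow_add]
    split <;> ring
  -- extract divisibility facts
  constructor
  · intro h6
    have hdvd6 : (6 : ℤ) ∣ t y := Int.dvd_of_emod_eq_zero h6
    have hd3 : (3 : ℤ) ∣ t y := dvd_trans (by norm_num) hdvd6
    have hd2 : (2 : ℤ) ∣ t y := dvd_trans (by norm_num) hdvd6
    have hy3 : (3 : ℕ) ∣ y := by
      have hz : ((t y : ℤ) : ZMod 3) = 0 :=
        (ZMod.intCast_zmod_eq_zero_iff_dvd _ 3).mpr (by exact_mod_cast hd3)
      rw [h3] at hz
      exact (ZMod.natCast_eq_zero_iff y 3).mp hz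
    have hsig_even : 2 ∣ sigma2 y := by
      have h0 : ((sigma2 y : ℕ) : ZMod 2) = 0 := by
        rw [← h2]
        exact (ZMod.intCast_zmod_eq_zero_iff_dvd _ 2).mpr (by exact_mod_cast hd2)
      exact (ZMod.natCast_eq_zero_iff _ 2).mp h0
    rw [main hy3, Even.neg_one_pow ⟨sigma2 y / 2, by omega⟩, one_mul]
  · intro h6
    have hd3 : (3 : ℤ) ∣ t y := by
      have : t y % 3 = 0 := by omega
      exact Int.dvd_of_emod_eq_zero this
    have hodd : t y % 2 = 1 := by omega
    have hy3 : (3 : ℕ) ∣ y := by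
      have h0 : ((y : ℕ) : ZMod 3) = 0 := by
        have : ((t y : ℤ) : ZMod 3) = 0 :=
          (ZMod.intCast_zmod_eq_zero_iff_dvd _ 3).mpr (by exact_mod_cast hd3)
        rw [h3] at this
        exact this
      exact (ZMod.natCast_eq_zero_iff y 3).mp h0
    have hsig_odd : ¬ (2 ∣ sigma2 y) := by
      intro hcon
      have h0 : ((sigma2 y : ℕ) : ZMod 2) = 0 := (ZMod.natCast_eq_zero_iff _ 2).mpr hcon
      rw [← h2] at h0
      have : (2 : ℤ) ∣ t y := by exact_mod_cast (ZMod.intCast_zmod_eq_zero_iff_dvd _ 2).mp h0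
      omega
    have : Odd (sigma2 y) := Nat.odd_iff.mpr (by omega)
    rw [main hy3, this.neg_one_pow]
    ring
end
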